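/- arXiv:1605.07700 — 3 statements merged into one kernel-verified Lean document; each statement's English description precedes it below -/
import Mathlib

section
/- Let T be a square real matrix indexed by a finite type with ‖T‖ ≤ 1 in the induced ∞-operator norm, let γ be a real number with 0 ≤ γ < 1, and let v, w be vectors satisfying v = (T w − w) + γ (T v). Then ‖v + w‖_∞ ≤ ‖w‖_∞, where ‖·‖_∞ on vectors denotes the sup norm. -/
open Matrix

attribute [local instance] Matrix.linftyOpNormedAddCommGroup Matrix.linftyOpNormedRing

/-- If `‖T‖ ≤ 1` (induced ∞-operator norm), `0 ≤ γ < 1`, and `v = (T w - w) + γ (T v)`,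
then `‖v + w‖_∞ ≤ ‖w‖_∞` (sup norm on vectors). -/
theorem stmt_5 {n : Type*} [Fintype n] [DecidableEq n] (T : Matrix n n ℝ)
    (hT : ‖T‖ ≤ 1) (γ : ℝ) (hγ0 : 0 ≤ γ) (hγ1 : γ < 1) (v w : n → ℝ)
    (hbellman : v = (T *ᵥ w - w) + γ • (T *ᵥ v)) :
    ‖v + w‖ ≤ ‖w‖ := by
  have key : v + w = T *ᵥ (w + γ • v) := by
    rw [Matrix.mulVec_add, Matrix.mulVec_smul]
    nth_rewrite 1 [hbellman]; abel
  have h1 : ‖v + w‖ ≤ ‖w + γ • v‖ := by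
    rw [key]
    calc ‖T *ᵥ (w + γ • v)‖ ≤ ‖T‖ * ‖w + γ • v‖ := Matrix.linfty_opNorm_mulVec _ _
      _ ≤ 1 * ‖w + γ • v‖ := by
        exact mul_le_mul_of_nonneg_right hT (norm_nonneg _)
      _ = ‖w + γ • v‖ := one_mul _
  have h2 : w + γ • v = (1 - γ) • w + γ • (v + w) := by
    ext i; simp [Pi.smul_apply]; ring
  have h3 : ‖v + w‖ ≤ (1 - γ) * ‖w‖ + γ * ‖v + w‖ := by
    calc ‖v + w‖ ≤ ‖w + γ • v‖ := h1
      _ = ‖(1 - γ) • w + γ • (v + w)‖ := by rw [h2]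
      _ ≤ ‖(1 - γ) • w‖ + ‖γ • (v + w)‖ := norm_add_le _ _
      _ = (1 - γ) * ‖w‖ + γ * ‖v + w‖ := by
        rw [norm_smul, norm_smul, Real.norm_eq_abs, Real.norm_eq_abs,
          abs_of_nonneg (by linarith), abs_of_nonneg hγ0]
  nlinarith [norm_nonneg (v + w)]
end

section
/- Let T be a row-stochastic square real matrix indexed by a nonempty finite type (all entries nonnegative and every row sums to 1), let γ be a real number with 0 ≤ γ < 1, let w be a vector with all entries nonnegative, and let v be a vector satisfying v = (T w − w) + γ (T v). If s* is an index at which w attains its maximum value (w_{s*} = max_s w_s), then v_{s*} ≤ 0. -/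
open Matrix

/-- Let `T` be row-stochastic, `0 ≤ γ < 1`, `w ≥ 0` entrywise, and let `v` satisfy the
Bellman equation `v = (T w - w) + γ (T v)`. If `w` attains its maximum at `s*`, then
`v s* ≤ 0`. -/
theorem stmt_8 {n : Type*} [Fintype n] [Nonempty n] (T : Matrix n n ℝ)
    (hpos : ∀ i j, 0 ≤ T i j) (hsum : ∀ i, ∑ j, T i j = 1)
    (γ : ℝ) (hγ0 : 0 ≤ γ) (hγ1 : γ < 1) (w : n → ℝ) (hw : ∀ i, 0 ≤ w i)
    (v : n → ℝ) (hbellman : v = (T *ᵥ w - w) + γ • (T *ᵥ v))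
    (s : n) (hs : ∀ i, w i ≤ w s) :
    v s ≤ 0 := by
  -- key bound: row-stochasticity gives (T x) i ≤ c when x ≤ c pointwise
  have key : ∀ (x : n → ℝ) (c : ℝ), (∀ j, x j ≤ c) → ∀ i, (T *ᵥ x) i ≤ c := by
    intro x c hx i
    have : (T *ᵥ x) i = ∑ j, T i j * x j := rfl
    rw [this]
    calc ∑ j, T i j * x j ≤ ∑ j, T i j * c := by
          apply Finset.sum_le_sum
          intro j _
          exact mul_le_mul_of_nonneg_left (hx j) (hpos i j)
      _ = c := by rw [← Finset.sum_mul, hsum i, one_mul]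
  have hb : ∀ i, v i = (T *ᵥ w) i - w i + γ * (T *ᵥ v) i := by
    intro i
    have := congrFun hbellman i
    simpa using this
  -- let u = v + w, attaining max at i0
  obtain ⟨i0, hi0⟩ := Finite.exists_max (fun i => v i + w i)
  have hTu : (T *ᵥ (v + w)) i0 = (T *ᵥ v) i0 + (T *ᵥ w) i0 := by
    rw [Matrix.mulVec_add]; rfl
  have h1 : (T *ᵥ (v + w)) i0 ≤ v i0 + w i0 := key _ _ (fun j => hi0 j) i0
  have h2 : (T *ᵥ w) i0 ≤ w s := key _ _ hs i0
  have h3 : (T *ᵥ w) s ≤ w s := key _ _ hs s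
  -- u i0 ≤ w s
  have hu0 : v i0 + w i0 ≤ w s := by
    have := hb i0
    nlinarith [h1, h2, hTu]
  have := hi0 s
  linarith
end

section
/- Let T be a row-stochastic square real matrix indexed by a nonempty finite type (all entries nonnegative and every row sums to 1), let γ be a real number with 0 ≤ γ < 1, let w be any vector, and let v be a vector satisfying v = (T w − w) + γ (T v). Then there exists an index s such that v_s ≤ 0; i.e., the set { s : v_s ≤ 0 } is nonempty. (Option's Termination: since an option discovered by Algorithm 1 terminates exactly at the states where the optimal value is not positive, its termination set is nonempty.) -/
open Matrix

/-- **Option's Termination.** Let `T` be row-stochastic, `0 ≤ γ < 1`, `w` any vector, and let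
`v` satisfy the Bellman equation `v = (T w - w) + γ (T v)`. Then some state has non-positive
value: the set `{s | v s ≤ 0}` is nonempty. -/
theorem stmt_9 {n : Type*} [Fintype n] [Nonempty n] (T : Matrix n n ℝ)
    (hpos : ∀ i j, 0 ≤ T i j) (hsum : ∀ i, ∑ j, T i j = 1)
    (γ : ℝ) (hγ0 : 0 ≤ γ) (hγ1 : γ < 1) (w : n → ℝ)
    (v : n → ℝ) (hbellman : v = (T *ᵥ w - w) + γ • (T *ᵥ v)) :
    ∃ s : n, v s ≤ 0 := by
  set x : n → ℝ := w + γ • v with hx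
  have hTx : T *ᵥ x = v + w := by
    rw [hx, mulVec_add, mulVec_smul]
    funext i
    have := congrFun hbellman i
    simp only [Pi.add_apply, Pi.sub_apply, Pi.smul_apply, smul_eq_mul] at this ⊢
    linarith
  obtain ⟨s, hs⟩ := Finite.exists_max x
  refine ⟨s, ?_⟩
  have hmax : (T *ᵥ x) s ≤ x s := by
    have h1 : (T *ᵥ x) s = ∑ j, T s j * x j := rfl
    have h2 : ∑ j, T s j * x j ≤ ∑ j, T s j * x s := by
      apply Finset.sum_le_sum
      intro j _
      exact mul_le_mul_of_nonneg_left (hs j) (hpos s j)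
    rw [h1]
    calc ∑ j, T s j * x j ≤ ∑ j, T s j * x s := h2
      _ = (∑ j, T s j) * x s := by rw [Finset.sum_mul]
      _ = x s := by rw [hsum s, one_mul]
  have h3 := congrFun hTx s
  simp only [Pi.add_apply] at h3
  have h4 : x s = w s + γ * v s := rfl
  nlinarith
end
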